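/- Let d ≥ 2 be an integer, let v : {0,1}^d → ℝ be a coalitional game with Shapley values φ(v) ∈ ℝ^d, and let φ ∈ ℝ^d satisfy the efficiency constraint 1^⊤φ = v(1) − v(0). Then ‖φ − φ(v)‖₂² ≤ 2·H_{d−1}·(h_v(φ) − h_v(φ(v))). -/

import Mathlib

open scoped BigOperators

/-- The `n`-th harmonic number `H_n = ∑_{k=1}^n 1/k`. -/
noncomputable def harm (n : ℕ) : ℝ := ∑ k ∈ Finset.Icc 1 n, (1 : ℝ) / k

/-- Normalizing constant `Q = ∑_{k=1}^{d-1} (d-1)/(k(d-k))` of the Shapley kernel. -/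
noncomputable def shapQ (d : ℕ) : ℝ :=
  ∑ k ∈ Finset.Icc 1 (d - 1), ((d : ℝ) - 1) / ((k : ℝ) * ((d : ℝ) - (k : ℝ)))

/-- Shapley kernel distribution on subsets `s ⊆ {1,…,d}`. -/
noncomputable def pSh (d : ℕ) (s : Finset (Fin d)) : ℝ :=
  if 0 < s.card ∧ s.card < d then
    (((d : ℝ) - 1) /
      ((Nat.choose d s.card : ℝ) * (s.card : ℝ) * ((d : ℝ) - (s.card : ℝ)))) / shapQ d
  else 0

/-- Shapley regression loss `h_v(φ) = E_{s∼p_Sh}[(v(s) - v(0) - sᵀφ)²]`. -/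
noncomputable def hLoss (d : ℕ) (v : Finset (Fin d) → ℝ)
    (φ : EuclideanSpace ℝ (Fin d)) : ℝ :=
  ∑ s : Finset (Fin d), pSh d s * (v s - v ∅ - ∑ i ∈ s, φ i) ^ 2

/-- Shapley values `φ_i(v) = (1/d) ∑_{s : i ∉ s} C(d-1, |s|)⁻¹ (v(s+e_i) - v(s))`. -/
noncomputable def shapleyValue (d : ℕ) (v : Finset (Fin d) → ℝ) :
    EuclideanSpace ℝ (Fin d) :=
  WithLp.toLp 2 fun i => (1 / (d : ℝ)) *
    ∑ s ∈ Finset.univ.filter (fun s : Finset (Fin d) => i ∉ s),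
      ((Nat.choose (d - 1) s.card : ℝ))⁻¹ * (v (insert i s) - v s)

namespace ShapleyAux

open Finset

set_option linter.unusedSectionVars false

lemma harm_pos {n : ℕ} (hn : 1 ≤ n) : 0 < harm n := by
  apply Finset.sum_pos
  · intro k hk
    simp only [Finset.mem_Icc] at hk
    have : (0:ℝ) < k := by exact_mod_cast hk.1
    positivity
  · exact ⟨1, by simp [hn]⟩

lemma harm_refl {d : ℕ} (hd : 2 ≤ d) :
    ∑ k ∈ Finset.Icc 1 (d - 1), (1 : ℝ) / ((d : ℝ) - (k : ℝ)) = harm (d - 1) := by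
  unfold harm
  refine Finset.sum_nbij' (fun k => d - k) (fun k => d - k) ?_ ?_ ?_ ?_ ?_
  · intro k hk; simp only [Finset.mem_Icc] at *; omega
  · intro k hk; simp only [Finset.mem_Icc] at *; omega
  · intro k hk; simp only [Finset.mem_Icc] at *; omega
  · intro k hk; simp only [Finset.mem_Icc] at *; omega
  · intro k hk
    simp only [Finset.mem_Icc] at hk
    have : ((d - k : ℕ) : ℝ) = (d : ℝ) - k := by
      have : k ≤ d := by omega
      push_cast [Nat.cast_sub this]; ring
    rw [this]

lemma shapQ_eq {d : ℕ} (hd : 2 ≤ d) :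
    shapQ d = 2 * harm (d - 1) * ((d : ℝ) - 1) / d := by
  unfold shapQ
  have h1 : ∀ k ∈ Finset.Icc 1 (d - 1),
      ((d : ℝ) - 1) / ((k : ℝ) * ((d : ℝ) - (k : ℝ)))
        = ((d : ℝ) - 1) / d * ((1:ℝ)/k + 1/((d:ℝ) - k)) := by
    intro k hk
    simp only [Finset.mem_Icc] at hk
    have hk0 : (0:ℝ) < k := by exact_mod_cast hk.1
    have hkd : (k:ℝ) < d := by
      have : k < d := by omega
      exact_mod_cast this
    have hd0 : (0:ℝ) < d := by positivity
    have hdk : (d:ℝ) - k ≠ 0 := by linarith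
    field_simp
    ring
  rw [Finset.sum_congr rfl h1, ← Finset.mul_sum, Finset.sum_add_distrib, harm_refl hd]
  show ((d:ℝ)-1)/d * (harm (d-1) + harm (d-1)) = _
  ring

noncomputable def wf (d : ℕ) (k : ℕ) : ℝ :=
  if 0 < k ∧ k < d then
    (((d : ℝ) - 1) / ((Nat.choose d k : ℝ) * (k : ℝ) * ((d : ℝ) - (k : ℝ)))) / shapQ d
  else 0

lemma wf_val {d k : ℕ} (hd : 2 ≤ d) (hk1 : 1 ≤ k) (hk2 : k ≤ d - 1) :
    wf d k = (d : ℝ) /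
      (2 * harm (d - 1) * (Nat.choose d k : ℝ) * (k : ℝ) * ((d : ℝ) - (k : ℝ))) := by
  have hkd : k < d := by omega
  have hH : 0 < harm (d - 1) := harm_pos (by omega)
  have hC : (0:ℝ) < (Nat.choose d k : ℝ) := by
    exact_mod_cast Nat.choose_pos (le_of_lt hkd)
  have hk0 : (0:ℝ) < k := by exact_mod_cast hk1
  have hkdR : (k:ℝ) < d := by exact_mod_cast hkd
  have hd0 : (0:ℝ) < d := by positivity
  have hd1 : (1:ℝ) < d := by
    have : (2:ℝ) ≤ d := by exact_mod_cast hd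
    linarith
  have hdk : (d:ℝ) - k ≠ 0 := by linarith
  have hdne : (d:ℝ) - 1 ≠ 0 := by linarith
  rw [wf, if_pos ⟨hk1, hkd⟩, shapQ_eq hd]
  rw [div_div_eq_mul_div, div_mul_eq_mul_div, div_div]
  rw [div_eq_div_iff (by positivity) (by positivity)]
  ring

lemma wf_key {d k : ℕ} (hd : 2 ≤ d) (hk : k ≤ d - 2) :
    wf d (k + 1) = (1 / (2 * harm (d - 1) * d)) *
      ((Nat.choose (d - 1) k : ℝ)⁻¹ + (Nat.choose (d - 1) (k + 1) : ℝ)⁻¹) := by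
  have hH : 0 < harm (d - 1) := harm_pos (by omega)
  have hk1d : k + 1 ≤ d - 1 := by omega
  have hds : (d - 1).succ = d := by omega
  have hAnat : d * Nat.choose (d-1) k = Nat.choose d (k+1) * (k+1) := by
    have hA' := Nat.add_one_mul_choose_eq (d - 1) k
    rw [Nat.succ_eq_add_one] at hds; rw [hds] at hA'
    exact_mod_cast hA'
  have hBnat : d * Nat.choose (d-1) (k+1) = Nat.choose d (k+1) * (d - (k+1)) := by
    have h2 := Nat.choose_succ_right_eq (d-1) k
    apply Nat.eq_of_mul_eq_mul_right (show 0 < k+1 by omega)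
    calc d * Nat.choose (d-1) (k+1) * (k+1)
        = d * (Nat.choose (d-1) (k+1) * (k+1)) := by ring
      _ = d * (Nat.choose (d-1) k * ((d-1) - k)) := by rw [h2]
      _ = (d * Nat.choose (d-1) k) * (d-1-k) := by ring
      _ = Nat.choose d (k+1) * (k+1) * (d-1-k) := by rw [hAnat]
      _ = Nat.choose d (k+1) * (d - (k+1)) * (k+1) := by
          have h3 : d - 1 - k = d - (k+1) := by omega
          rw [h3]; ring
  have hk1led : k + 1 ≤ d := by omega
  have hA : (d : ℝ) * (Nat.choose (d - 1) k : ℝ) = (Nat.choose d (k+1) : ℝ) * ((k:ℝ)+1) := by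
    exact_mod_cast hAnat
  have hB : (d : ℝ) * (Nat.choose (d - 1) (k+1) : ℝ)
      = (Nat.choose d (k+1) : ℝ) * ((d:ℝ) - ((k:ℝ)+1)) := by
    have : ((d - (k+1) : ℕ) : ℝ) = (d:ℝ) - ((k:ℝ)+1) := by
      push_cast [Nat.cast_sub hk1led]; ring
    rw [← this]
    exact_mod_cast hBnat
  have hCa : (0:ℝ) < (Nat.choose (d-1) k : ℝ) := by
    exact_mod_cast Nat.choose_pos (by omega : k ≤ d - 1)
  have hCb : (0:ℝ) < (Nat.choose (d-1) (k+1) : ℝ) := by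
    exact_mod_cast Nat.choose_pos hk1d
  have hCN : (0:ℝ) < (Nat.choose d (k+1) : ℝ) := by
    exact_mod_cast Nat.choose_pos hk1led
  have hd0 : (0:ℝ) < d := by positivity
  have hdk : (0:ℝ) < (d:ℝ) - ((k:ℝ)+1) := by
    have : (k:ℝ) + 1 < d := by exact_mod_cast (show k + 1 < d by omega)
    linarith
  have haa : (Nat.choose (d-1) k : ℝ) = (Nat.choose d (k+1) : ℝ) * ((k:ℝ)+1) / d := by
    rw [eq_div_iff (ne_of_gt hd0)]; linarith [hA]
  have hbb : (Nat.choose (d-1) (k+1) : ℝ)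
      = (Nat.choose d (k+1) : ℝ) * ((d:ℝ) - ((k:ℝ)+1)) / d := by
    rw [eq_div_iff (ne_of_gt hd0)]; linarith [hB]
  rw [wf_val hd (by omega) hk1d]
  have hk1R : ((k+1:ℕ):ℝ) = (k:ℝ)+1 := by push_cast; ring
  rw [hk1R, haa, hbb]
  have hk10 : (0:ℝ) < (k:ℝ)+1 := by positivity
  field_simp
  ring

section SumLemmas
variable {α : Type*} [DecidableEq α]

lemma sum_powerset_card (B : Finset α) (g : ℕ → ℝ) :
    ∑ t ∈ B.powerset, g t.card
      = ∑ k ∈ Finset.range (B.card + 1), (B.card.choose k : ℝ) * g k := by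
  rw [Finset.sum_powerset]
  refine Finset.sum_congr rfl fun k _ => ?_
  rw [Finset.sum_congr rfl
      (fun t ht => by rw [(Finset.mem_powersetCard.1 ht).2] :
        ∀ t ∈ Finset.powersetCard k B, g t.card = g k),
    Finset.sum_const, Finset.card_powersetCard, nsmul_eq_mul]

lemma sum_powerset_ite_insert {A : Finset α} {j : α} (hj : j ∈ A) (f : Finset α → ℝ) :
    ∑ t ∈ A.powerset, (if j ∈ t then f t else 0)
      = ∑ u ∈ (A.erase j).powerset, f (insert j u) := by
  conv_lhs => rw [← Finset.insert_erase hj, Finset.sum_powerset_insert (Finset.notMem_erase j A)]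
  have h1 : ∑ t ∈ (A.erase j).powerset, (if j ∈ t then f t else 0) = 0 := by
    refine Finset.sum_eq_zero fun t ht => ?_
    have : j ∉ t := fun hjt =>
      Finset.notMem_erase j A ((Finset.mem_powerset.1 ht) hjt)
    simp [this]
  rw [h1, zero_add]
  exact Finset.sum_congr rfl fun u _ => by simp

lemma sum_powerset_ite_not {A : Finset α} {j : α} (hj : j ∈ A) (f : Finset α → ℝ) :
    ∑ t ∈ A.powerset, (if j ∈ t then 0 else f t) = ∑ u ∈ (A.erase j).powerset, f u := by
  conv_lhs => rw [← Finset.insert_erase hj, Finset.sum_powerset_insert (Finset.notMem_erase j A)]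
  have h2 : ∑ u ∈ (A.erase j).powerset, (if j ∈ insert j u then 0 else f (insert j u)) = 0 := by
    refine Finset.sum_eq_zero fun u _ => by simp
  rw [h2, add_zero]
  refine Finset.sum_congr rfl fun t ht => ?_
  have : j ∉ t := fun hjt =>
    Finset.notMem_erase j A ((Finset.mem_powerset.1 ht) hjt)
  simp [this]

lemma sum_powerset_split {A : Finset α} {j : α} (hj : j ∈ A) (f : Finset α → ℝ) :
    ∑ t ∈ A.powerset, f t
      = ∑ u ∈ (A.erase j).powerset, f u + ∑ u ∈ (A.erase j).powerset, f (insert j u) := by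
  rw [← sum_powerset_ite_not hj, ← sum_powerset_ite_insert hj]
  rw [← Finset.sum_add_distrib]
  exact Finset.sum_congr rfl fun t _ => by by_cases h : j ∈ t <;> simp [h]

end SumLemmas

lemma alpha_term {d k : ℕ} (hd : 2 ≤ d) (hk : k ≤ d - 2) :
    ((d-2).choose k : ℝ) * wf d (k+1) = 1 / (2 * harm (d-1) * ((d:ℝ)-1)) := by
  have hH : 0 < harm (d - 1) := harm_pos (by omega)
  rw [wf_key hd hk]
  have hds : (d - 2).succ = d - 1 := by omega
  have h1nat : (d-1) * Nat.choose (d-2) k = Nat.choose (d-1) (k+1) * (k+1) := by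
    have := Nat.add_one_mul_choose_eq (d - 2) k
    rw [Nat.succ_eq_add_one] at hds; rw [hds] at this
    exact_mod_cast this
  have h2nat : (d-1) * Nat.choose (d-2) k = Nat.choose (d-1) k * ((d-1) - k) :=
    h1nat.trans (Nat.choose_succ_right_eq (d-1) k)
  have hsub : ((d - 1 - k : ℕ) : ℝ) = (d:ℝ) - 1 - k := by
    push_cast [Nat.cast_sub (show k ≤ d - 1 by omega), Nat.cast_sub (show 1 ≤ d by omega)]
    ring
  have hd1R : ((d - 1 : ℕ) : ℝ) = (d:ℝ) - 1 := by
    push_cast [Nat.cast_sub (show 1 ≤ d by omega)]; ring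
  have h1 : ((d:ℝ)-1) * ((d-2).choose k : ℝ) = ((d-1).choose (k+1) : ℝ) * ((k:ℝ)+1) := by
    rw [← hd1R]; exact_mod_cast h1nat
  have h2 : ((d:ℝ)-1) * ((d-2).choose k : ℝ) = ((d-1).choose k : ℝ) * ((d:ℝ)-1-(k:ℝ)) := by
    have := congrArg (fun n : ℕ => (n : ℝ)) h2nat
    push_cast [Nat.cast_sub (show k ≤ d - 1 by omega),
      Nat.cast_sub (show 1 ≤ d by omega)] at this
    linarith [this]
  have hCa : (0:ℝ) < ((d-1).choose k : ℝ) := by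
    exact_mod_cast Nat.choose_pos (by omega : k ≤ d - 1)
  have hCb : (0:ℝ) < ((d-1).choose (k+1) : ℝ) := by
    exact_mod_cast Nat.choose_pos (by omega : k + 1 ≤ d - 1)
  have hC2 : (0:ℝ) < ((d-2).choose k : ℝ) := by
    exact_mod_cast Nat.choose_pos hk
  have hd0 : (0:ℝ) < d := by positivity
  have hd1 : (1:ℝ) < d := by
    have : (2:ℝ) ≤ d := by exact_mod_cast hd
    linarith
  have hdk : (0:ℝ) < (d:ℝ) - 1 - k := by
    have : (k:ℝ) < (d:ℝ) - 1 := by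
      have : k < d - 1 := by omega
      calc (k:ℝ) < ((d-1:ℕ):ℝ) := by exact_mod_cast this
        _ = (d:ℝ) - 1 := hd1R
    linarith
  have hk10 : (0:ℝ) < (k:ℝ) + 1 := by positivity
  have haa : ((d-1).choose k : ℝ) = ((d:ℝ)-1) * ((d-2).choose k : ℝ) / ((d:ℝ)-1-k) := by
    rw [eq_div_iff (ne_of_gt hdk)]; linarith [h2]
  have hbb : ((d-1).choose (k+1) : ℝ) = ((d:ℝ)-1) * ((d-2).choose k : ℝ) / ((k:ℝ)+1) := by
    rw [eq_div_iff (ne_of_gt hk10)]; linarith [h1]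
  rw [haa, hbb, inv_div, inv_div, ← add_div]
  have hsum : ((d:ℝ)-1-k) + ((k:ℝ)+1) = d := by ring
  rw [hsum, mul_comm, div_mul_div_comm, one_mul]
  have hp1 : (0:ℝ) < 2 * harm (d - 1) * ↑d * ((↑d - 1) * ↑((d - 2).choose k)) := by
    have : (0:ℝ) < (d:ℝ) - 1 := by linarith
    have h2H : (0:ℝ) < 2 * harm (d-1) := by linarith
    exact mul_pos (mul_pos h2H hd0) (mul_pos this hC2)
  have hp2 : (0:ℝ) < 2 * harm (d - 1) * ((d:ℝ) - 1) := by
    have : (0:ℝ) < (d:ℝ) - 1 := by linarith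
    have h2H : (0:ℝ) < 2 * harm (d-1) := by linarith
    exact mul_pos h2H this
  rw [div_mul_eq_mul_div, div_eq_div_iff (ne_of_gt hp1) (ne_of_gt hp2)]
  ring

lemma alpha_sum {d : ℕ} (hd : 2 ≤ d) {B : Finset (Fin d)} (hB : B.card = d - 2) :
    ∑ u ∈ B.powerset, wf d (u.card + 1) = 1 / (2 * harm (d-1)) := by
  have hH : 0 < harm (d - 1) := harm_pos (by omega)
  rw [sum_powerset_card B (fun k => wf d (k+1)), hB]
  rw [Finset.sum_congr rfl (fun k hk => alpha_term hd (by
      simp only [Finset.mem_range] at hk; omega))]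
  rw [Finset.sum_const, Finset.card_range, nsmul_eq_mul]
  have : ((d - 2 + 1 : ℕ) : ℝ) = (d:ℝ) - 1 := by
    push_cast [Nat.cast_sub (show 2 ≤ d from hd)]; ring
  rw [this]
  have hd1 : (0:ℝ) < (d:ℝ) - 1 := by
    have : (2:ℝ) ≤ d := by exact_mod_cast hd
    linarith
  field_simp


noncomputable def cconst (d : ℕ) : ℝ :=
  ∑ k ∈ Finset.range (d - 2 + 1), ((d-2).choose k : ℝ) * wf d (k+2)

lemma pSh_eq (d : ℕ) (s : Finset (Fin d)) : pSh d s = wf d s.card := rfl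

variable {d : ℕ}

lemma sum_univ_ite_insert (i : Fin d) (f : Finset (Fin d) → ℝ) :
    ∑ s : Finset (Fin d), (if i ∈ s then f s else 0)
      = ∑ t ∈ (Finset.univ.erase i).powerset, f (insert i t) := by
  rw [← Finset.powerset_univ]
  exact sum_powerset_ite_insert (Finset.mem_univ i) f

lemma sum_univ_ite_not (i : Fin d) (f : Finset (Fin d) → ℝ) :
    ∑ s : Finset (Fin d), (if i ∈ s then 0 else f s)
      = ∑ t ∈ (Finset.univ.erase i).powerset, f t := by
  rw [← Finset.powerset_univ]
  exact sum_powerset_ite_not (Finset.mem_univ i) f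

lemma mem_erase_univ {i j : Fin d} (hij : j ≠ i) : j ∈ Finset.univ.erase i :=
  Finset.mem_erase.2 ⟨hij, Finset.mem_univ j⟩

lemma cardE (hd : 2 ≤ d) {i j : Fin d} (hij : j ≠ i) :
    ((Finset.univ.erase i).erase j).card = d - 2 := by
  rw [Finset.card_erase_of_mem (mem_erase_univ hij),
    Finset.card_erase_of_mem (Finset.mem_univ i)]
  simp only [Finset.card_univ, Fintype.card_fin]
  omega

lemma E_comm (i j : Fin d) :
    (Finset.univ.erase i).erase j = (Finset.univ.erase j).erase i := by
  ext x
  simp only [Finset.mem_erase, Finset.mem_univ, and_true]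
  tauto

lemma notmem_of_powersetE {i j : Fin d} {u : Finset (Fin d)}
    (hu : u ∈ ((Finset.univ.erase i).erase j).powerset) : i ∉ u ∧ j ∉ u := by
  have h := Finset.mem_powerset.1 hu
  constructor
  · intro hi
    exact Finset.notMem_erase i _ (Finset.mem_of_mem_erase (h hi))
  · intro hj
    exact Finset.notMem_erase j _ (h hj)

lemma card_insert_one {i : Fin d} {u : Finset (Fin d)} (hi : i ∉ u) :
    (insert i u).card = u.card + 1 := Finset.card_insert_of_notMem hi

lemma card_insert_two {i j : Fin d} {u : Finset (Fin d)} (hij : i ≠ j)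
    (hi : i ∉ u) (hj : j ∉ u) : (insert i (insert j u)).card = u.card + 2 := by
  rw [Finset.card_insert_of_notMem (by simp [hij, hi]),
    Finset.card_insert_of_notMem hj]

lemma shapley_eq (v : Finset (Fin d) → ℝ) (i : Fin d) :
    shapleyValue d v i = (1 / (d : ℝ)) *
      ∑ t ∈ (Finset.univ.erase i).powerset,
        (((d-1).choose t.card : ℝ))⁻¹ * (v (insert i t) - v t) := by
  simp only [shapleyValue, WithLp.ofLp_toLp]
  congr 1
  rw [Finset.sum_filter]
  rw [← sum_univ_ite_not i (fun t => (((d-1).choose t.card : ℝ))⁻¹ * (v (insert i t) - v t))]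
  exact Finset.sum_congr rfl fun s _ => by by_cases h : i ∈ s <;> simp [h]

noncomputable def Mfun (d : ℕ) (i j : Fin d) : ℝ :=
  ∑ s : Finset (Fin d), (if i ∈ s ∧ j ∈ s then pSh d s else 0)

lemma Mfun_ne (hd : 2 ≤ d) {i j : Fin d} (hij : i ≠ j) : Mfun d i j = cconst d := by
  unfold Mfun
  have step1 : ∀ s : Finset (Fin d),
      (if i ∈ s ∧ j ∈ s then pSh d s else 0)
        = (if i ∈ s then (if j ∈ s then pSh d s else 0) else 0) := by
    intro s; by_cases h1 : i ∈ s <;> by_cases h2 : j ∈ s <;> simp [h1, h2]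
  rw [Finset.sum_congr rfl fun s _ => step1 s,
    sum_univ_ite_insert i (fun s => if j ∈ s then pSh d s else 0)]
  have step2 : ∀ t ∈ (Finset.univ.erase i).powerset,
      (if j ∈ insert i t then pSh d (insert i t) else 0)
        = (if j ∈ t then pSh d (insert i t) else 0) := by
    intro t _
    have : j ∈ insert i t ↔ j ∈ t := by simp [Finset.mem_insert, hij.symm]
    by_cases h : j ∈ t
    · rw [if_pos (this.2 h), if_pos h]
    · rw [if_neg (fun hm => h (this.1 hm)), if_neg h]
  rw [Finset.sum_congr rfl step2,
    sum_powerset_ite_insert (mem_erase_univ (Ne.symm hij)) (fun t => pSh d (insert i t))]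
  have step3 : ∀ u ∈ ((Finset.univ.erase i).erase j).powerset,
      pSh d (insert i (insert j u)) = wf d (u.card + 2) := by
    intro u hu
    obtain ⟨hi, hj⟩ := notmem_of_powersetE hu
    rw [pSh_eq, card_insert_two hij hi hj]
  rw [Finset.sum_congr rfl step3,
    sum_powerset_card _ (fun k => wf d (k+2)), cardE hd (Ne.symm hij)]
  rfl

lemma Mfun_diag (hd : 2 ≤ d) (i : Fin d) :
    Mfun d i i = cconst d + 1 / (2 * harm (d-1)) := by
  obtain ⟨j, hj⟩ := Fintype.exists_ne_of_one_lt_card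
    (by rw [Fintype.card_fin]; omega) i
  unfold Mfun
  have step1 : ∀ s : Finset (Fin d),
      (if i ∈ s ∧ i ∈ s then pSh d s else 0) = (if i ∈ s then pSh d s else 0) := by
    intro s; by_cases h : i ∈ s <;> simp [h]
  rw [Finset.sum_congr rfl fun s _ => step1 s, sum_univ_ite_insert i (pSh d)]
  have step2 : ∀ t ∈ (Finset.univ.erase i).powerset,
      pSh d (insert i t) = wf d (t.card + 1) := by
    intro t ht
    have hi : i ∉ t := fun h =>
      Finset.notMem_erase i _ ((Finset.mem_powerset.1 ht) h)
    rw [pSh_eq, card_insert_one hi]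
  rw [Finset.sum_congr rfl step2,
    sum_powerset_split (mem_erase_univ hj) (fun t => wf d (t.card + 1))]
  have step3 : ∀ u ∈ ((Finset.univ.erase i).erase j).powerset,
      wf d ((insert j u).card + 1) = wf d (u.card + 2) := by
    intro u hu
    obtain ⟨_, hju⟩ := notmem_of_powersetE hu
    rw [card_insert_one hju]
  rw [Finset.sum_congr rfl step3, alpha_sum hd (cardE hd hj),
    sum_powerset_card _ (fun k => wf d (k+2)), cardE hd hj]
  rw [add_comm]
  rfl

lemma Mfun_eq (hd : 2 ≤ d) (i j : Fin d) :
    Mfun d i j = cconst d + (if i = j then 1 / (2 * harm (d-1)) else 0) := by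
  by_cases h : i = j
  · rw [if_pos h, ← h, Mfun_diag hd]
  · rw [if_neg h, add_zero, Mfun_ne hd h]

lemma sum_extend (s : Finset (Fin d)) (F : Fin d → ℝ) :
    ∑ i ∈ s, F i = ∑ i : Fin d, (if i ∈ s then F i else 0) := by
  rw [Finset.sum_ite_mem, Finset.univ_inter]

lemma quad (hd : 2 ≤ d) (δ : Fin d → ℝ) (hδ : ∑ i, δ i = 0) :
    ∑ s : Finset (Fin d), pSh d s * (∑ i ∈ s, δ i)^2
      = (1 / (2 * harm (d-1))) * ∑ i, δ i ^ 2 := by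
  have step1 : ∀ s : Finset (Fin d), pSh d s * (∑ i ∈ s, δ i)^2
      = ∑ i : Fin d, ∑ j : Fin d,
          (if i ∈ s ∧ j ∈ s then pSh d s else 0) * (δ i * δ j) := by
    intro s
    calc pSh d s * (∑ i ∈ s, δ i)^2
        = ∑ i ∈ s, ∑ j ∈ s, pSh d s * (δ i * δ j) := by
          rw [sq, Finset.sum_mul_sum, Finset.mul_sum]
          exact Finset.sum_congr rfl fun i _ => by rw [Finset.mul_sum]
      _ = ∑ i ∈ s, ∑ j : Fin d, (if j ∈ s then pSh d s * (δ i * δ j) else 0) :=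
          Finset.sum_congr rfl fun i _ => sum_extend s _
      _ = ∑ i : Fin d, (if i ∈ s then
            (∑ j : Fin d, (if j ∈ s then pSh d s * (δ i * δ j) else 0)) else 0) :=
          sum_extend s _
      _ = ∑ i : Fin d, ∑ j : Fin d,
            (if i ∈ s ∧ j ∈ s then pSh d s else 0) * (δ i * δ j) := by
          refine Finset.sum_congr rfl fun i _ => ?_
          by_cases hi : i ∈ s
          · rw [if_pos hi]
            refine Finset.sum_congr rfl fun j _ => ?_
            by_cases hj : j ∈ s <;> simp [hi, hj]
          · rw [if_neg hi]
            rw [Finset.sum_congr rfl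
              (fun j _ => by simp [hi] : ∀ j ∈ Finset.univ,
                (if i ∈ s ∧ j ∈ s then pSh d s else 0) * (δ i * δ j) = 0)]
            simp
  rw [Finset.sum_congr rfl fun s _ => step1 s]
  rw [Finset.sum_comm]
  rw [Finset.sum_congr rfl fun (i : Fin d) _ => Finset.sum_comm]
  have step2 : ∀ i j : Fin d,
      ∑ s : Finset (Fin d), (if i ∈ s ∧ j ∈ s then pSh d s else 0) * (δ i * δ j)
        = Mfun d i j * (δ i * δ j) := by
    intro i j
    rw [← Finset.sum_mul]
    rfl
  rw [Finset.sum_congr rfl fun i _ => Finset.sum_congr rfl fun j _ => step2 i j]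
  have step3 : ∀ i j : Fin d, Mfun d i j * (δ i * δ j)
      = cconst d * (δ i * δ j)
        + (if i = j then (1/(2*harm (d-1))) * (δ i * δ j) else 0) := by
    intro i j
    rw [Mfun_eq hd, add_mul]
    by_cases h : i = j <;> simp [h]
  rw [Finset.sum_congr rfl fun i _ => Finset.sum_congr rfl fun j _ => step3 i j]
  have step4 : ∀ i : Fin d,
      ∑ j : Fin d, (cconst d * (δ i * δ j)
        + (if i = j then (1/(2*harm (d-1))) * (δ i * δ j) else 0))
      = cconst d * δ i * (∑ j, δ j) + (1/(2*harm (d-1))) * δ i ^ 2 := by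
    intro i
    rw [Finset.sum_add_distrib, Finset.sum_ite_eq]
    simp only [Finset.mem_univ, if_pos]
    have h1 : ∑ j : Fin d, cconst d * (δ i * δ j) = cconst d * δ i * ∑ j, δ j := by
      rw [Finset.mul_sum]
      exact Finset.sum_congr rfl fun j _ => by ring
    rw [h1, pow_two]
  rw [Finset.sum_congr rfl fun i _ => step4 i, Finset.sum_add_distrib, hδ]
  simp only [mul_zero, Finset.sum_const_zero, zero_add]
  rw [← Finset.mul_sum]


lemma bdiff (hd : 2 ≤ d) (v : Finset (Fin d) → ℝ) {i j : Fin d} (hij : i ≠ j) :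
    ∑ u ∈ ((Finset.univ.erase i).erase j).powerset,
      wf d (u.card + 1) * (v (insert i u) - v (insert j u))
    = (1 / (2 * harm (d-1))) * (shapleyValue d v i - shapleyValue d v j) := by
  set a : ℕ → ℝ := fun k => (((d-1).choose k : ℝ))⁻¹ with ha
  set E := (Finset.univ.erase i).erase j with hE
  have hji : j ∈ Finset.univ.erase i := mem_erase_univ (Ne.symm hij)
  have hijE : i ∈ Finset.univ.erase j := mem_erase_univ hij
  have hmem : ∀ u ∈ E.powerset, i ∉ u ∧ j ∉ u := fun u hu => notmem_of_powersetE hu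
  have hcard : ∀ u ∈ E.powerset, u.card ≤ d - 2 := by
    intro u hu
    have := Finset.card_le_card (Finset.mem_powerset.1 hu)
    rwa [cardE hd (Ne.symm hij)] at this
  have hsplit_i : shapleyValue d v i = (1/(d:ℝ)) * ∑ u ∈ E.powerset,
      (a u.card * (v (insert i u) - v u)
        + a (u.card+1) * (v (insert i (insert j u)) - v (insert j u))) := by
    rw [shapley_eq v i]
    congr 1
    rw [sum_powerset_split hji
      (fun t => a t.card * (v (insert i t) - v t)), ← Finset.sum_add_distrib]
    refine Finset.sum_congr rfl fun u hu => ?_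
    obtain ⟨_, hju⟩ := hmem u hu
    rw [card_insert_one hju]
  have hsplit_j : shapleyValue d v j = (1/(d:ℝ)) * ∑ u ∈ E.powerset,
      (a u.card * (v (insert j u) - v u)
        + a (u.card+1) * (v (insert i (insert j u)) - v (insert i u))) := by
    rw [shapley_eq v j]
    congr 1
    rw [sum_powerset_split hijE
      (fun t => a t.card * (v (insert j t) - v t)), ← E_comm, ← Finset.sum_add_distrib]
    refine Finset.sum_congr rfl fun u hu => ?_
    obtain ⟨hiu, _⟩ := hmem u hu
    rw [card_insert_one hiu, Finset.insert_comm]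
  rw [hsplit_i, hsplit_j, ← mul_sub, ← Finset.sum_sub_distrib, Finset.mul_sum,
    Finset.mul_sum]
  refine Finset.sum_congr rfl fun u hu => ?_
  rw [wf_key hd (hcard u hu)]
  ring


lemma cross (hd : 2 ≤ d) (v : Finset (Fin d) → ℝ) (δ : Fin d → ℝ) (hδ : ∑ i, δ i = 0) :
    ∑ s : Finset (Fin d),
      pSh d s * ((v s - v ∅ - ∑ i ∈ s, shapleyValue d v i) * (∑ i ∈ s, δ i)) = 0 := by
  set r : Finset (Fin d) → ℝ := fun s => v s - v ∅ - ∑ i ∈ s, shapleyValue d v i with hr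
  set g : Fin d → ℝ := fun i => ∑ s : Finset (Fin d),
    (if i ∈ s then pSh d s * r s else 0) with hg
  have step1 : ∀ s : Finset (Fin d), pSh d s * (r s * ∑ i ∈ s, δ i)
      = ∑ i : Fin d, (if i ∈ s then pSh d s * r s else 0) * δ i := by
    intro s
    calc pSh d s * (r s * ∑ i ∈ s, δ i)
        = ∑ i ∈ s, (pSh d s * r s) * δ i := by
          rw [Finset.mul_sum, Finset.mul_sum]
          exact Finset.sum_congr rfl fun i _ => by ring
      _ = ∑ i : Fin d, (if i ∈ s then (pSh d s * r s) * δ i else 0) := sum_extend s _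
      _ = ∑ i : Fin d, (if i ∈ s then pSh d s * r s else 0) * δ i := by
          refine Finset.sum_congr rfl fun i _ => ?_
          by_cases h : i ∈ s <;> simp [h]
  rw [Finset.sum_congr rfl fun s _ => step1 s, Finset.sum_comm]
  have step2 : ∀ i : Fin d,
      ∑ s : Finset (Fin d), (if i ∈ s then pSh d s * r s else 0) * δ i
        = g i * δ i := fun i => by rw [← Finset.sum_mul]
  rw [Finset.sum_congr rfl fun i _ => step2 i]
  -- g is constant
  have hgsplit : ∀ (i j : Fin d), i ≠ j → g i
      = (∑ u ∈ ((Finset.univ.erase i).erase j).powerset,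
          wf d (u.card + 1) * r (insert i u))
        + ∑ u ∈ ((Finset.univ.erase i).erase j).powerset,
          wf d (u.card + 2) * r (insert i (insert j u)) := by
    intro i j hij
    rw [hg]
    simp only
    rw [sum_univ_ite_insert i (fun s => pSh d s * r s)]
    have h1 : ∀ t ∈ (Finset.univ.erase i).powerset,
        pSh d (insert i t) * r (insert i t) = wf d (t.card + 1) * r (insert i t) := by
      intro t ht
      have hi : i ∉ t := fun h =>
        Finset.notMem_erase i _ ((Finset.mem_powerset.1 ht) h)
      rw [pSh_eq, card_insert_one hi]
    rw [Finset.sum_congr rfl h1,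
      sum_powerset_split (mem_erase_univ (Ne.symm hij))
        (fun t => wf d (t.card + 1) * r (insert i t))]
    congr 1
    refine Finset.sum_congr rfl fun u hu => ?_
    obtain ⟨_, hju⟩ := notmem_of_powersetE hu
    rw [card_insert_one hju]
  have gconst : ∀ (i j : Fin d), g i = g j := by
    intro i j
    by_cases hij : i = j
    · rw [hij]
    · have hEC : ((Finset.univ.erase j).erase i) = ((Finset.univ.erase i).erase j) :=
        (E_comm i j).symm
      have hgi := hgsplit i j hij
      have hgj := hgsplit j i (Ne.symm hij)
      rw [hEC] at hgj
      have hsame : ∀ u ∈ ((Finset.univ.erase i).erase j).powerset,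
          wf d (u.card + 2) * r (insert j (insert i u))
            = wf d (u.card + 2) * r (insert i (insert j u)) := by
        intro u _
        rw [Finset.insert_comm]
      rw [Finset.sum_congr rfl hsame] at hgj
      have hdiff : ∀ u ∈ ((Finset.univ.erase i).erase j).powerset,
          wf d (u.card + 1) * r (insert i u) - wf d (u.card + 1) * r (insert j u)
            = wf d (u.card + 1) * (v (insert i u) - v (insert j u))
              - wf d (u.card + 1) * (shapleyValue d v i - shapleyValue d v j) := by
        intro u hu
        obtain ⟨hiu, hju⟩ := notmem_of_powersetE hu
        rw [hr]
        simp only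
        rw [Finset.sum_insert hiu, Finset.sum_insert hju]
        ring
      have hz : g i - g j = 0 := by
        rw [hgi, hgj]
        have : (∑ u ∈ ((Finset.univ.erase i).erase j).powerset,
              wf d (u.card + 1) * r (insert i u))
            - ∑ u ∈ ((Finset.univ.erase i).erase j).powerset,
              wf d (u.card + 1) * r (insert j u)
          = (∑ u ∈ ((Finset.univ.erase i).erase j).powerset,
              wf d (u.card + 1) * (v (insert i u) - v (insert j u)))
            - (∑ u ∈ ((Finset.univ.erase i).erase j).powerset,
              wf d (u.card + 1))
              * (shapleyValue d v i - shapleyValue d v j) := by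
          rw [← Finset.sum_sub_distrib, Finset.sum_congr rfl hdiff,
            Finset.sum_sub_distrib, Finset.sum_mul]
        rw [bdiff hd v hij, alpha_sum hd (cardE hd (Ne.symm hij))] at this
        have h0 : (∑ u ∈ ((Finset.univ.erase i).erase j).powerset,
              wf d (u.card + 1) * r (insert i u))
            - ∑ u ∈ ((Finset.univ.erase i).erase j).powerset,
              wf d (u.card + 1) * r (insert j u) = 0 := by
          rw [this]; ring
        linarith [h0]
      linarith [hz]
  have i0 : Fin d := ⟨0, by omega⟩
  rw [Finset.sum_congr rfl fun i _ => by rw [gconst i i0]]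
  rw [← Finset.mul_sum, hδ, mul_zero]


lemma count_ite_mem (s : Finset (Fin d)) (c : ℝ) :
    ∑ i : Fin d, (if i ∈ s then c else 0) = (s.card : ℝ) * c := by
  rw [← sum_extend s (fun _ => c), Finset.sum_const, nsmul_eq_mul]

lemma count_ite_not_mem (s : Finset (Fin d)) (c : ℝ) :
    ∑ i : Fin d, (if i ∈ s then 0 else c) = ((d - s.card : ℕ) : ℝ) * c := by
  have h1 : ∀ i : Fin d, (if i ∈ s then (0:ℝ) else c) = (if i ∈ sᶜ then c else 0) := by
    intro i
    by_cases h : i ∈ s <;> simp [h, Finset.mem_compl]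
  rw [Finset.sum_congr rfl fun i _ => h1 i, ← sum_extend sᶜ (fun _ => c),
    Finset.sum_const, nsmul_eq_mul, Finset.card_compl, Fintype.card_fin]

lemma efficiency (hd : 2 ≤ d) (v : Finset (Fin d) → ℝ) :
    ∑ i, shapleyValue d v i = v Finset.univ - v ∅ := by
  set a : ℕ → ℝ := fun k => (((d-1).choose k : ℝ))⁻¹ with ha
  have hrw : ∀ i : Fin d, shapleyValue d v i = (1/(d:ℝ)) *
      ∑ t ∈ (Finset.univ.erase i).powerset, a t.card * (v (insert i t) - v t) :=
    fun i => shapley_eq v i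
  rw [Finset.sum_congr rfl fun i _ => hrw i, ← Finset.mul_sum]
  have hS : ∀ i : Fin d,
      ∑ t ∈ (Finset.univ.erase i).powerset, a t.card * (v (insert i t) - v t)
        = (∑ s : Finset (Fin d), (if i ∈ s then a (s.card - 1) * v s else 0))
          - ∑ s : Finset (Fin d), (if i ∈ s then 0 else a s.card * v s) := by
    intro i
    rw [sum_univ_ite_insert i (fun s => a (s.card - 1) * v s),
      sum_univ_ite_not i (fun s => a s.card * v s), ← Finset.sum_sub_distrib]
    refine Finset.sum_congr rfl fun t ht => ?_
    have hi : i ∉ t := fun h =>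
      Finset.notMem_erase i _ ((Finset.mem_powerset.1 ht) h)
    rw [card_insert_one hi, Nat.add_sub_cancel]
    ring
  rw [Finset.sum_congr rfl fun i _ => hS i, Finset.sum_sub_distrib,
    Finset.sum_comm, Finset.sum_comm (f := fun i (s : Finset (Fin d)) =>
      (if i ∈ s then (0:ℝ) else a s.card * v s))]
  have hcount : (∑ s : Finset (Fin d), ∑ i : Fin d, (if i ∈ s then a (s.card - 1) * v s else 0))
      - ∑ s : Finset (Fin d), ∑ i : Fin d, (if i ∈ s then 0 else a s.card * v s)
      = ∑ s : Finset (Fin d),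
        ((s.card : ℝ) * (a (s.card - 1) * v s) - ((d - s.card : ℕ) : ℝ) * (a s.card * v s)) := by
    rw [← Finset.sum_sub_distrib]
    exact Finset.sum_congr rfl fun s _ => by
      rw [count_ite_mem, count_ite_not_mem]
  rw [hcount]
  have coef : ∀ s : Finset (Fin d),
      (s.card : ℝ) * (a (s.card - 1) * v s) - ((d - s.card : ℕ) : ℝ) * (a s.card * v s)
        = (if s = Finset.univ then (d:ℝ) else if s = ∅ then -(d:ℝ) else 0) * v s := by
    intro s
    have hkle : s.card ≤ d := by
      have := Finset.card_le_card (Finset.subset_univ s)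
      rwa [Finset.card_univ, Fintype.card_fin] at this
    by_cases hu : s = Finset.univ
    · subst hu
      rw [if_pos rfl]
      have hc : (Finset.univ : Finset (Fin d)).card = d := by
        rw [Finset.card_univ, Fintype.card_fin]
      rw [hc, ha]
      simp only [Nat.choose_self, Nat.cast_one, inv_one, Nat.sub_self, Nat.cast_zero]
      ring
    · rw [if_neg hu]
      by_cases he : s = ∅
      · subst he
        rw [if_pos rfl, ha]
        simp only [Finset.card_empty, Nat.cast_zero, Nat.choose_zero_right,
          Nat.cast_one, inv_one, Nat.sub_zero]
        ring
      · rw [if_neg he]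
        set k := s.card with hk
        have hk1 : 1 ≤ k := by
          rcases Finset.nonempty_iff_ne_empty.2 he with ⟨x, hx⟩
          have := Finset.card_pos.2 ⟨x, hx⟩
          omega
        have hkd : k < d := by
          rcases Nat.lt_or_ge k d with h | h
          · exact h
          · exfalso
            apply hu
            apply Finset.eq_univ_of_card
            rw [Fintype.card_fin]; omega
        have hnat : Nat.choose (d-1) k * k = Nat.choose (d-1) (k-1) * (d - k) := by
          have := Nat.choose_succ_right_eq (d-1) (k-1)
          have hs1 : k - 1 + 1 = k := by omega
          have hs2 : d - 1 - (k - 1) = d - k := by omega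
          rw [hs1, hs2] at this
          exact this
        have hreal : ((d-1).choose k : ℝ) * (k:ℝ) = ((d-1).choose (k-1) : ℝ) * ((d - k : ℕ) : ℝ) := by
          exact_mod_cast hnat
        have hCa : (0:ℝ) < ((d-1).choose k : ℝ) := by
          exact_mod_cast Nat.choose_pos (by omega : k ≤ d - 1)
        have hCb : (0:ℝ) < ((d-1).choose (k-1) : ℝ) := by
          exact_mod_cast Nat.choose_pos (by omega : k - 1 ≤ d - 1)
        rw [ha]
        simp only
        rw [zero_mul]
        have key : (k:ℝ) * (((d-1).choose (k-1) : ℝ))⁻¹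
            - ((d - k : ℕ) : ℝ) * (((d-1).choose k : ℝ))⁻¹ = 0 := by
          have hcast : ((d - k : ℕ) : ℝ) = (d:ℝ) - (k:ℝ) := by
            push_cast [Nat.cast_sub hkle]
            ring
          rw [hcast]
          rw [hcast] at hreal
          field_simp
          linarith [hreal]
        linear_combination (v s) * key
  rw [Finset.sum_congr rfl fun s _ => coef s]
  have hzero : ∀ s ∈ (Finset.univ : Finset (Finset (Fin d))),
      s ∉ ({Finset.univ, ∅} : Finset (Finset (Fin d))) →
      (if s = Finset.univ then (d:ℝ) else if s = ∅ then -(d:ℝ) else 0) * v s = 0 := by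
    intro s _ hs
    simp only [Finset.mem_insert, Finset.mem_singleton] at hs
    push_neg at hs
    rw [if_neg hs.1, if_neg (Finset.nonempty_iff_ne_empty.1 hs.2), zero_mul]
  rw [← Finset.sum_subset (Finset.subset_univ _) hzero]
  have hne : (Finset.univ : Finset (Fin d)) ≠ ∅ := by
    apply Finset.nonempty_iff_ne_empty.1
    exact ⟨⟨0, by omega⟩, Finset.mem_univ _⟩
  rw [Finset.sum_pair hne]
  rw [if_pos rfl, if_neg (Ne.symm hne), if_pos rfl]
  have hd0 : (d:ℝ) ≠ 0 := by
    have : (0:ℝ) < d := by positivity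
    positivity
  field_simp
  ring

end ShapleyAux
/-- If `φ` satisfies the efficiency constraint `1ᵀφ = v(1) - v(0)`, then
`‖φ - φ(v)‖² ≤ 2 H_{d-1} (h_v(φ) - h_v(φ(v)))`. -/
theorem shapley_value_estimation_bound (d : ℕ) (hd : 2 ≤ d) (v : Finset (Fin d) → ℝ)
    (φ : EuclideanSpace ℝ (Fin d))
    (heff : ∑ i, φ i = v Finset.univ - v ∅) :
    ‖φ - shapleyValue d v‖ ^ 2 ≤
      2 * harm (d - 1) * (hLoss d v φ - hLoss d v (shapleyValue d v)) := by
  classical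
  open ShapleyAux in
  have hH : 0 < harm (d-1) := harm_pos (by omega)
  set δ : Fin d → ℝ := fun i => φ i - shapleyValue d v i with hδdef
  have hsum0 : ∑ i, δ i = 0 := by
    rw [hδdef]
    simp only
    rw [Finset.sum_sub_distrib, heff, ShapleyAux.efficiency hd v]
    ring
  have hnorm : ‖φ - shapleyValue d v‖ ^ 2 = ∑ i, δ i ^ 2 := by
    rw [EuclideanSpace.norm_eq]
    rw [Real.sq_sqrt (by positivity)]
    refine Finset.sum_congr rfl fun i _ => ?_
    have h1 : (φ - shapleyValue d v) i = δ i := rfl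
    rw [h1, Real.norm_eq_abs, sq_abs]
  have hdiff : hLoss d v φ - hLoss d v (shapleyValue d v)
      = (1 / (2 * harm (d-1))) * ∑ i, δ i ^ 2 := by
    unfold hLoss
    rw [← Finset.sum_sub_distrib]
    have hper : ∀ s : Finset (Fin d),
        pSh d s * (v s - v ∅ - ∑ i ∈ s, φ i)^2
          - pSh d s * (v s - v ∅ - ∑ i ∈ s, shapleyValue d v i)^2
        = pSh d s * (∑ i ∈ s, δ i)^2
          - 2 * (pSh d s * ((v s - v ∅ - ∑ i ∈ s, shapleyValue d v i) * (∑ i ∈ s, δ i))) := by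
      intro s
      have hsplit : ∑ i ∈ s, φ i = ∑ i ∈ s, shapleyValue d v i + ∑ i ∈ s, δ i := by
        rw [← Finset.sum_add_distrib]
        exact Finset.sum_congr rfl fun i _ => by rw [hδdef]; ring
      rw [hsplit]
      ring
    rw [Finset.sum_congr rfl fun s _ => hper s, Finset.sum_sub_distrib,
      ShapleyAux.quad hd δ hsum0, ← Finset.mul_sum,
      ShapleyAux.cross hd v δ hsum0, mul_zero, sub_zero]
  rw [hnorm, hdiff]
  have hfin : 2 * harm (d-1) * ((1 / (2 * harm (d-1))) * ∑ i, δ i ^ 2)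
      = ∑ i, δ i ^ 2 := by
    field_simp
  have hdd : d - 1 = d - 1 := rfl
  rw [hfin]
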